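/- Let n ≥ 3 and let z_1, …, z_n be real numbers with ∑_{i=1}^n z_i = 0. Set p_r = ∑_i z_i^r. Then ∑_{1 ≤ i < j < k ≤ n} (z_i - z_j)^2 (z_j - z_k)^2 (z_k - z_i)^2 = -p_2^3 - n·p_3^2 + n·p_2·p_4. -/
import Mathlib


open Finset

private def f3 {n : ℕ} (z : Fin n → ℝ) (i j k : Fin n) : ℝ :=
  (z i - z j) ^ 2 * (z j - z k) ^ 2 * (z k - z i) ^ 2

private lemma f3_split {n : ℕ} (z : Fin n → ℝ) (i j k : Fin n) :
    f3 z i j k =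
      (if i < j ∧ j < k then f3 z i j k else 0) +
      (if i < k ∧ k < j then f3 z i j k else 0) +
      (if j < i ∧ i < k then f3 z i j k else 0) +
      (if j < k ∧ k < i then f3 z i j k else 0) +
      (if k < i ∧ i < j then f3 z i j k else 0) +
      (if k < j ∧ j < i then f3 z i j k else 0) := by
  by_cases h : i = j ∨ j = k ∨ i = k
  · rcases h with h | h | h <;> subst h <;>
      (split_ifs <;> first | omega | (unfold f3; ring))
  · push_neg at h
    obtain ⟨h1, h2, h3⟩ := h
    split_ifs <;> first | omega | ring

theorem triangle_square_graph_sum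
    (n : ℕ) (hn : 3 ≤ n) (z : Fin n → ℝ) (hz : ∑ i, z i = 0)
    (p₂ p₃ p₄ : ℝ)
    (hp₂ : p₂ = ∑ i, z i ^ 2) (hp₃ : p₃ = ∑ i, z i ^ 3) (hp₄ : p₄ = ∑ i, z i ^ 4) :
    (∑ i : Fin n, ∑ j : Fin n, ∑ k : Fin n,
        if i < j ∧ j < k then (z i - z j) ^ 2 * (z j - z k) ^ 2 * (z k - z i) ^ 2 else 0)
      = -p₂ ^ 3 - (n : ℝ) * p₃ ^ 2 + (n : ℝ) * p₂ * p₄ := by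
  -- permutation lemmas for triple sums
  have swap12 : ∀ F : Fin n → Fin n → Fin n → ℝ,
      (∑ i, ∑ j, ∑ k, F i j k) = ∑ i, ∑ j, ∑ k, F j i k := fun F =>
    Finset.sum_comm (s := univ) (t := univ) (f := fun i j => ∑ k, F i j k)
  have swap23 : ∀ F : Fin n → Fin n → Fin n → ℝ,
      (∑ i, ∑ j, ∑ k, F i j k) = ∑ i, ∑ j, ∑ k, F i k j := fun F =>
    Finset.sum_congr rfl fun i _ =>
      Finset.sum_comm (s := univ) (t := univ) (f := fun j k => F i j k)
  have cyc : ∀ F : Fin n → Fin n → Fin n → ℝ,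
      (∑ i, ∑ j, ∑ k, F i j k) = ∑ i, ∑ j, ∑ k, F k i j := fun F =>
    (swap12 F).trans (swap23 fun a b c => F b a c)
  have cyc2 : ∀ F : Fin n → Fin n → Fin n → ℝ,
      (∑ i, ∑ j, ∑ k, F i j k) = ∑ i, ∑ j, ∑ k, F j k i := fun F =>
    (cyc F).trans (cyc fun a b c => F c a b)
  have swap13 : ∀ F : Fin n → Fin n → Fin n → ℝ,
      (∑ i, ∑ j, ∑ k, F i j k) = ∑ i, ∑ j, ∑ k, F k j i := fun F =>
    (cyc F).trans (swap12 fun a b c => F c a b)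
  set T : ℝ := ∑ i : Fin n, ∑ j : Fin n, ∑ k : Fin n,
      if i < j ∧ j < k then f3 z i j k else 0 with hT
  -- each of the six ordered sums equals T
  have e2 : (∑ i : Fin n, ∑ j : Fin n, ∑ k : Fin n,
      if i < k ∧ k < j then f3 z i j k else 0) = T := by
    rw [swap23 fun i j k => if i < k ∧ k < j then f3 z i j k else 0, hT]
    refine Finset.sum_congr rfl fun i _ => Finset.sum_congr rfl fun j _ =>
      Finset.sum_congr rfl fun k _ => ?_
    exact if_congr Iff.rfl (by unfold f3; ring) rfl
  have e3 : (∑ i : Fin n, ∑ j : Fin n, ∑ k : Fin n,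
      if j < i ∧ i < k then f3 z i j k else 0) = T := by
    rw [swap12 fun i j k => if j < i ∧ i < k then f3 z i j k else 0, hT]
    refine Finset.sum_congr rfl fun i _ => Finset.sum_congr rfl fun j _ =>
      Finset.sum_congr rfl fun k _ => ?_
    exact if_congr Iff.rfl (by unfold f3; ring) rfl
  have e4 : (∑ i : Fin n, ∑ j : Fin n, ∑ k : Fin n,
      if j < k ∧ k < i then f3 z i j k else 0) = T := by
    rw [cyc fun i j k => if j < k ∧ k < i then f3 z i j k else 0, hT]
    refine Finset.sum_congr rfl fun i _ => Finset.sum_congr rfl fun j _ =>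
      Finset.sum_congr rfl fun k _ => ?_
    exact if_congr Iff.rfl (by unfold f3; ring) rfl
  have e5 : (∑ i : Fin n, ∑ j : Fin n, ∑ k : Fin n,
      if k < i ∧ i < j then f3 z i j k else 0) = T := by
    rw [cyc2 fun i j k => if k < i ∧ i < j then f3 z i j k else 0, hT]
    refine Finset.sum_congr rfl fun i _ => Finset.sum_congr rfl fun j _ =>
      Finset.sum_congr rfl fun k _ => ?_
    exact if_congr Iff.rfl (by unfold f3; ring) rfl
  have e6 : (∑ i : Fin n, ∑ j : Fin n, ∑ k : Fin n,
      if k < j ∧ j < i then f3 z i j k else 0) = T := by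
    rw [swap13 fun i j k => if k < j ∧ j < i then f3 z i j k else 0, hT]
    refine Finset.sum_congr rfl fun i _ => Finset.sum_congr rfl fun j _ =>
      Finset.sum_congr rfl fun k _ => ?_
    exact if_congr Iff.rfl (by unfold f3; ring) rfl
  -- the full sum is 6T
  have hS : (∑ i : Fin n, ∑ j : Fin n, ∑ k : Fin n, f3 z i j k) = 6 * T := by
    calc (∑ i : Fin n, ∑ j : Fin n, ∑ k : Fin n, f3 z i j k)
        = ∑ i : Fin n, ∑ j : Fin n, ∑ k : Fin n,
            ((if i < j ∧ j < k then f3 z i j k else 0) +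
             (if i < k ∧ k < j then f3 z i j k else 0) +
             (if j < i ∧ i < k then f3 z i j k else 0) +
             (if j < k ∧ k < i then f3 z i j k else 0) +
             (if k < i ∧ i < j then f3 z i j k else 0) +
             (if k < j ∧ j < i then f3 z i j k else 0)) := by
          exact Finset.sum_congr rfl fun i _ => Finset.sum_congr rfl fun j _ =>
            Finset.sum_congr rfl fun k _ => f3_split z i j k
      _ = T +
          (∑ i : Fin n, ∑ j : Fin n, ∑ k : Fin n,
              if i < k ∧ k < j then f3 z i j k else 0) +
          (∑ i : Fin n, ∑ j : Fin n, ∑ k : Fin n,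
              if j < i ∧ i < k then f3 z i j k else 0) +
          (∑ i : Fin n, ∑ j : Fin n, ∑ k : Fin n,
              if j < k ∧ k < i then f3 z i j k else 0) +
          (∑ i : Fin n, ∑ j : Fin n, ∑ k : Fin n,
              if k < i ∧ i < j then f3 z i j k else 0) +
          (∑ i : Fin n, ∑ j : Fin n, ∑ k : Fin n,
              if k < j ∧ j < i then f3 z i j k else 0) := by
          simp [Finset.sum_add_distrib, hT]
      _ = 6 * T := by rw [e2, e3, e4, e5, e6]; ring
  -- generic power-sum evaluation of a quartic sum
  have helper : ∀ A B C D E : ℝ,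
      (∑ k : Fin n, (A * z k ^ 4 + B * z k ^ 3 + C * z k ^ 2 + D * z k + E))
        = A * p₄ + B * p₃ + C * p₂ + (n : ℝ) * E := by
    intro A B C D E
    simp only [Finset.sum_add_distrib, ← Finset.mul_sum, Finset.sum_const,
      Finset.card_univ, Fintype.card_fin, nsmul_eq_mul]
    rw [hz, ← hp₂, ← hp₃, ← hp₄]
    ring
  -- evaluate the full sum algebraically
  have h1 : ∀ i j : Fin n, (∑ k, f3 z i j k) =
      (z i - z j) ^ 2 * p₄ + (-2 * (z i + z j) * (z i - z j) ^ 2) * p₃ +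
      (((z i + z j) ^ 2 + 2 * z i * z j) * (z i - z j) ^ 2) * p₂ +
      (n : ℝ) * (z i ^ 2 * z j ^ 2 * (z i - z j) ^ 2) := by
    intro i j
    calc (∑ k, f3 z i j k)
        = ∑ k, ((z i - z j) ^ 2 * z k ^ 4 +
            (-2 * (z i + z j) * (z i - z j) ^ 2) * z k ^ 3 +
            (((z i + z j) ^ 2 + 2 * z i * z j) * (z i - z j) ^ 2) * z k ^ 2 +
            (-2 * z i * z j * (z i + z j) * (z i - z j) ^ 2) * z k +
            (z i ^ 2 * z j ^ 2 * (z i - z j) ^ 2)) :=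
          Finset.sum_congr rfl fun k _ => by unfold f3; ring
      _ = _ := helper _ _ _ _ _
  have h2 : ∀ i : Fin n, (∑ j, ∑ k, f3 z i j k) =
      (2 * p₂ * p₄ - 2 * p₃ ^ 2) + (4 * p₂ * p₃) * z i +
      (2 * (n : ℝ) * p₄ - 6 * p₂ ^ 2) * z i ^ 2 +
      (-4 * (n : ℝ) * p₃) * z i ^ 3 + (2 * (n : ℝ) * p₂) * z i ^ 4 := by
    intro i
    calc (∑ j, ∑ k, f3 z i j k)
        = ∑ j, ((p₂ + (n : ℝ) * z i ^ 2) * z j ^ 4 +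
            (-2 * p₃ + 2 * z i * p₂ - 2 * (n : ℝ) * z i ^ 3) * z j ^ 3 +
            (p₄ + 2 * z i * p₃ - 6 * z i ^ 2 * p₂ + (n : ℝ) * z i ^ 4) * z j ^ 2 +
            (-2 * z i * p₄ + 2 * z i ^ 2 * p₃ + 2 * z i ^ 3 * p₂) * z j +
            (z i ^ 2 * p₄ - 2 * z i ^ 3 * p₃ + z i ^ 4 * p₂)) :=
          Finset.sum_congr rfl fun j _ => by rw [h1 i j]; ring
      _ = _ := by rw [helper]; ring
  have hS2 : (∑ i : Fin n, ∑ j : Fin n, ∑ k : Fin n, f3 z i j k)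
      = 6 * (-p₂ ^ 3 - (n : ℝ) * p₃ ^ 2 + (n : ℝ) * p₂ * p₄) := by
    calc (∑ i : Fin n, ∑ j : Fin n, ∑ k : Fin n, f3 z i j k)
        = ∑ i : Fin n, ((2 * (n : ℝ) * p₂) * z i ^ 4 +
            (-4 * (n : ℝ) * p₃) * z i ^ 3 +
            (2 * (n : ℝ) * p₄ - 6 * p₂ ^ 2) * z i ^ 2 +
            (4 * p₂ * p₃) * z i + (2 * p₂ * p₄ - 2 * p₃ ^ 2)) :=
          Finset.sum_congr rfl fun i _ => by rw [h2 i]; ring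
      _ = _ := by rw [helper]; ring
  have hgoal : (∑ i : Fin n, ∑ j : Fin n, ∑ k : Fin n,
      if i < j ∧ j < k then (z i - z j) ^ 2 * (z j - z k) ^ 2 * (z k - z i) ^ 2 else 0) = T := by
    rw [hT]; rfl
  rw [hgoal]
  have h6 : (6 : ℝ) * T = 6 * (-p₂ ^ 3 - (n : ℝ) * p₃ ^ 2 + (n : ℝ) * p₂ * p₄) := by
    rw [← hS, hS2]
  linarith
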